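/- If p ≥ 5 is a prime with p ≡ 3 (mod 4), then the product of any two conjugacy classes of involutions in PSL_2(p) contains no element of order p. -/

import Mathlib

open Matrix
variable {p : ℕ} [Fact p.Prime]



lemma endgame (hns : ¬ IsSquare (-1 : ZMod p))
    (x u v m b c : ZMod p)
    (hdet : x * (-x) - u * v = 1)
    (hNdet : m * (-m) - b * c = 0)
    (he : x * m + u * c + (m * x + b * v) = 0)
    (hn0 : ¬ (m = 0 ∧ b = 0 ∧ c = 0)) : False := by
  by_cases hc : c = 0
  · have hm : m = 0 := by
      have h1 : m * m = 0 := by linear_combination -hNdet - b * hc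
      exact mul_self_eq_zero.mp h1
    by_cases hb : b = 0
    · exact hn0 ⟨hm, hb, hc⟩
    · have hv : v = 0 := by
        have : b * v = 0 := by linear_combination he - (2*x) * hm - u * hc
        rcases mul_eq_zero.mp this with h | h
        · exact absurd h hb
        · exact h
      exact hns ⟨x, by linear_combination hdet + u * hv⟩
  · apply hns
    refine ⟨(v * m - x * c) * c⁻¹, ?_⟩
    field_simp
    linear_combination (c^2) * hdet + v^2 * hNdet + v*c*he

lemma nilp (N : Matrix (Fin 2) (Fin 2) (ZMod p)) (hNp : N ^ p = 0) (hN0 : N ≠ 0) :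
    N * N = 0 ∧ N 0 0 + N 1 1 = 0 ∧ N.det = 0 := by
  have hp2 := (Fact.out : p.Prime).two_le
  have hdet : N.det = 0 := by
    have h1 : N.det ^ p = 0 := by rw [← Matrix.det_pow, hNp]; exact Matrix.det_zero
    exact pow_eq_zero_iff (by omega) |>.mp h1
  set t : ZMod p := N 0 0 + N 1 1 with ht
  have hdet2 : N 0 0 * N 1 1 - N 0 1 * N 1 0 = 0 := by rw [← Matrix.det_fin_two]; exact hdet
  have hCH : N * N = t • N := by
    ext i j
    fin_cases i <;> fin_cases j <;>
      simp [Matrix.mul_apply, Fin.sum_univ_two, ht] <;>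
      first | linear_combination hdet2 | linear_combination -hdet2 | linear_combination (2:ZMod p)*hdet2 | linear_combination (-2:ZMod p)*hdet2 | ring
  have hpow : ∀ k : ℕ, N ^ (k + 1) = t ^ k • N := by
    intro k
    induction k with
    | zero => simp
    | succ n ih =>
      rw [pow_succ, ih, smul_mul_assoc, hCH, smul_smul, ← pow_succ]
  have hps : p = (p - 1) + 1 := by omega
  have h2 : t ^ (p - 1) • N = 0 := by rw [← hpow, ← hps, hNp]
  have ht0 : t = 0 := by
    rcases smul_eq_zero.mp h2 with h | h
    · exact pow_eq_zero_iff (by omega) |>.mp h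
    · exact absurd h hN0
  refine ⟨?_, ht0, hdet⟩
  rw [hCH, ht0, zero_smul]

lemma center_scalar {S : SpecialLinearGroup (Fin 2) (ZMod p)}
    (hS : S ∈ Subgroup.center (SpecialLinearGroup (Fin 2) (ZMod p))) :
    (S : Matrix (Fin 2) (Fin 2) (ZMod p)) = 1 ∨ (S : Matrix (Fin 2) (Fin 2) (ZMod p)) = -1 := by
  obtain ⟨r, hr1, hr2⟩ := Matrix.SpecialLinearGroup.mem_center_iff.mp hS
  have hr : r = 1 ∨ r = -1 := by
    have h : (r - 1) * (r + 1) = 0 := by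
      have : r ^ 2 = 1 := by simpa using hr1
      linear_combination this
    rcases mul_eq_zero.mp h with h | h
    · left; exact sub_eq_zero.mp h
    · right; linear_combination h
  rcases hr with h | h
  · left; rw [← hr2, h]; simp
  · right; rw [← hr2, h, map_neg, _root_.map_one]

lemma scalar_mem_center {S : SpecialLinearGroup (Fin 2) (ZMod p)}
    (h : (S : Matrix (Fin 2) (Fin 2) (ZMod p)) = 1 ∨ (S : Matrix (Fin 2) (Fin 2) (ZMod p)) = -1) :
    S ∈ Subgroup.center (SpecialLinearGroup (Fin 2) (ZMod p)) := by
  refine Subgroup.mem_center_iff.mpr fun g => Subtype.ext ?_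
  rcases h with h | h <;> simp [SpecialLinearGroup.coe_mul, h]

lemma sq_one_scalar (h2 : (2 : ZMod p) ≠ 0) (A : Matrix (Fin 2) (Fin 2) (ZMod p))
    (hdet : A.det = 1) (hA : A * A = 1) : A = 1 ∨ A = -1 := by
  have hd : A 0 0 * A 1 1 - A 0 1 * A 1 0 = 1 := by rw [← Matrix.det_fin_two]; exact hdet
  have e00 : A 0 0 * A 0 0 + A 0 1 * A 1 0 = 1 := by
    have := congrFun (congrFun hA 0) 0
    simpa [Matrix.mul_apply, Fin.sum_univ_two, Matrix.one_apply] using this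
  have e01 : A 0 0 * A 0 1 + A 0 1 * A 1 1 = 0 := by
    have := congrFun (congrFun hA 0) 1
    simpa [Matrix.mul_apply, Fin.sum_univ_two, Matrix.one_apply] using this
  have e10 : A 1 0 * A 0 0 + A 1 1 * A 1 0 = 0 := by
    have := congrFun (congrFun hA 1) 0
    simpa [Matrix.mul_apply, Fin.sum_univ_two, Matrix.one_apply] using this
  by_cases ht : A 0 0 + A 1 1 = 0
  · exfalso
    apply h2
    linear_combination A 0 0 * ht - e00 - hd
  · have hb : A 0 1 = 0 := by
      rcases mul_eq_zero.mp (show A 0 1 * (A 0 0 + A 1 1) = 0 by linear_combination e01) with h | h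
      · exact h
      · exact absurd h ht
    have hc : A 1 0 = 0 := by
      rcases mul_eq_zero.mp (show A 1 0 * (A 0 0 + A 1 1) = 0 by linear_combination e10) with h | h
      · exact h
      · exact absurd h ht
    have ha2 : A 0 0 * A 0 0 = 1 := by linear_combination e00 - A 1 0 * hb
    have had : A 0 0 * A 1 1 = 1 := by linear_combination hd + A 0 1 * hc
    have ha0 : A 0 0 ≠ 0 := fun h => by simp [h] at ha2
    have hda : A 1 1 = A 0 0 := by
      have : A 0 0 * (A 1 1 - A 0 0) = 0 := by linear_combination had - ha2
      rcases mul_eq_zero.mp this with h | h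
      · exact absurd h ha0
      · exact sub_eq_zero.mp h
    have : A 0 0 = 1 ∨ A 0 0 = -1 := by
      have h : (A 0 0 - 1) * (A 0 0 + 1) = 0 := by linear_combination ha2
      rcases mul_eq_zero.mp h with h | h
      · left; exact sub_eq_zero.mp h
      · right; linear_combination h
    rcases this with h | h
    · left; ext i j; fin_cases i <;> fin_cases j <;> simp [h, hb, hc, hda, Matrix.one_apply]
    · right; ext i j; fin_cases i <;> fin_cases j <;> simp [h, hb, hc, hda, Matrix.one_apply]

lemma sq_neg_one_trace (hns : ¬ IsSquare (-1 : ZMod p)) (A : Matrix (Fin 2) (Fin 2) (ZMod p))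
    (hA : A * A = -1) : A 0 0 + A 1 1 = 0 := by
  have e00 : A 0 0 * A 0 0 + A 0 1 * A 1 0 = -1 := by
    have := congrFun (congrFun hA 0) 0
    simpa [Matrix.mul_apply, Fin.sum_univ_two, Matrix.one_apply] using this
  have e01 : A 0 0 * A 0 1 + A 0 1 * A 1 1 = 0 := by
    have := congrFun (congrFun hA 0) 1
    simpa [Matrix.mul_apply, Fin.sum_univ_two, Matrix.one_apply] using this
  have e10 : A 1 0 * A 0 0 + A 1 1 * A 1 0 = 0 := by
    have := congrFun (congrFun hA 1) 0
    simpa [Matrix.mul_apply, Fin.sum_univ_two, Matrix.one_apply] using this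
  by_contra ht
  have hb : A 0 1 = 0 := by
    rcases mul_eq_zero.mp (show A 0 1 * (A 0 0 + A 1 1) = 0 by linear_combination e01) with h | h
    · exact h
    · exact absurd h ht
  have hc : A 1 0 = 0 := by
    rcases mul_eq_zero.mp (show A 1 0 * (A 0 0 + A 1 1) = 0 by linear_combination e10) with h | h
    · exact h
    · exact absurd h ht
  exact hns ⟨A 0 0, by linear_combination -e00 + A 1 0 * hb⟩

lemma final (hns : ¬ IsSquare (-1 : ZMod p)) (A C : Matrix (Fin 2) (Fin 2) (ZMod p))
    (hA2 : A * A = -1) (htr : A 0 0 + A 1 1 = 0) (hdetA : A.det = 1)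
    (hCp : C ^ p = 1) (hC1 : C ≠ 1) (hrel : C * A * C * A = -1) : False := by
  set N := C - 1 with hN
  have hNp : N ^ p = 0 := by
    rw [hN, sub_pow_char_of_commute p (Commute.one_right C), hCp, one_pow, sub_self]
  have hN0 : N ≠ 0 := sub_ne_zero.mpr hC1
  obtain ⟨hNN, hNtr, hNdet⟩ := nilp N hNp hN0
  have hC : C = N + 1 := by rw [hN]; noncomm_ring
  rw [hC] at hrel
  have hNP : N * (A * N * A) + (A * N * A) = N := by
    have expand : (N + 1) * A * (N + 1) * A
        = N * (A * N * A) + (A * N * A) + N * (A * A) + A * A := by noncomm_ring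
    rw [expand, hA2] at hrel
    linear_combination (norm := noncomm_ring) hrel
  have hP : A * N * A = N := by
    have h1 : (1 - N) * (N * (A * N * A) + (A * N * A)) = (1 - N) * N := by rw [hNP]
    have h2 : (1 - N) * (N * (A * N * A) + (A * N * A))
        = (A * N * A) - (N * N) * (A * N * A) := by noncomm_ring
    have h3 : (1 - N) * N = N - N * N := by noncomm_ring
    rw [h2, h3, hNN] at h1
    simpa using h1
  have hanti : A * N = -(N * A) := by
    have h1 : A * N * A * A = N * A := by rw [hP]
    rw [mul_assoc (A * N) A A, hA2, mul_neg_one] at h1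
    rw [← h1, neg_neg]
  have e := congrFun (congrFun hanti 0) 0
  simp only [Matrix.mul_apply, Fin.sum_univ_two, Matrix.neg_apply] at e
  have hd : A 0 0 * A 1 1 - A 0 1 * A 1 0 = 1 := by rw [← Matrix.det_fin_two]; exact hdetA
  have hnd : N 0 0 * N 1 1 - N 0 1 * N 1 0 = 0 := by rw [← Matrix.det_fin_two]; exact hNdet
  have hN11 : N 1 1 = -(N 0 0) := by linear_combination hNtr
  apply endgame hns (A 0 0) (A 0 1) (A 1 0) (N 0 0) (N 0 1) (N 1 0)
  · linear_combination hd - A 0 0 * htr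
  · linear_combination hnd - N 0 0 * hNtr
  · linear_combination e
  · rintro ⟨h1, h2, h3⟩
    apply hN0
    ext i j
    fin_cases i <;> fin_cases j <;> simp [h1, h2, h3, hN11]

/-- The projective special linear group `PSL₂(p)`. -/
abbrev PSL2 (p : ℕ) :=
  Matrix.SpecialLinearGroup (Fin 2) (ZMod p) ⧸
    Subgroup.center (Matrix.SpecialLinearGroup (Fin 2) (ZMod p))

theorem product_of_involutions_not_order_p
    (p : ℕ) (hp : p.Prime) (h5 : 5 ≤ p) (h4 : p % 4 = 3)
    (x y : PSL2 p) (hx : orderOf x = 2) (hy : orderOf y = 2) :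
    orderOf (x * y) ≠ p := by
  intro horder
  haveI : Fact p.Prime := ⟨hp⟩
  have hns : ¬ IsSquare (-1 : ZMod p) := fun h => (ZMod.exists_sq_eq_neg_one_iff.mp h) h4
  have h2 : (2 : ZMod p) ≠ 0 := by
    intro h
    have hd : p ∣ 2 := by
      have h' : ((2 : ℕ) : ZMod p) = 0 := by exact_mod_cast h
      exact (ZMod.natCast_eq_zero_iff 2 p).mp h'
    have := Nat.le_of_dvd (by norm_num) hd
    omega
  obtain ⟨X, hX⟩ := QuotientGroup.mk_surjective x
  obtain ⟨Y, hY⟩ := QuotientGroup.mk_surjective y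
  have key : ∀ (g : PSL2 p) (G : Matrix.SpecialLinearGroup (Fin 2) (ZMod p)),
      (QuotientGroup.mk G : PSL2 p) = g → orderOf g = 2 →
      (G : Matrix (Fin 2) (Fin 2) (ZMod p)) * G = -1 := by
    intro g G hG hg
    have hg2 : g ^ 2 = 1 := by have h' := pow_orderOf_eq_one g; rwa [hg] at h'
    have hcen : G ^ 2 ∈ Subgroup.center (Matrix.SpecialLinearGroup (Fin 2) (ZMod p)) := by
      rw [← QuotientGroup.eq_one_iff]
      rw [QuotientGroup.mk_pow, hG, hg2]
    have hsc := center_scalar hcen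
    rw [Matrix.SpecialLinearGroup.coe_pow, pow_two] at hsc
    rcases hsc with h | h
    · exfalso
      have hGc : G ∈ Subgroup.center (Matrix.SpecialLinearGroup (Fin 2) (ZMod p)) :=
        scalar_mem_center (sq_one_scalar h2 _ G.2 h)
      have hg1 : g = 1 := by rw [← hG]; exact (QuotientGroup.eq_one_iff G).mpr hGc
      rw [hg1, orderOf_one] at hg
      omega
    · exact h
  have hA2 := key x X hX hx
  have hB2 := key y Y hY hy
  set A : Matrix (Fin 2) (Fin 2) (ZMod p) := ↑X with hA
  set B : Matrix (Fin 2) (Fin 2) (ZMod p) := ↑Y with hB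
  have htrA := sq_neg_one_trace hns A hA2
  have hxyp : (x * y) ^ p = 1 := by have h' := pow_orderOf_eq_one (x * y); rwa [horder] at h'
  have hxy1 : x * y ≠ 1 := fun h => by rw [h, orderOf_one] at horder; omega
  have hmkXY : (QuotientGroup.mk (X * Y) : PSL2 p) = x * y := by
    rw [QuotientGroup.mk_mul, hX, hY]
  have hcenp : (X * Y) ^ p ∈ Subgroup.center (Matrix.SpecialLinearGroup (Fin 2) (ZMod p)) := by
    rw [← QuotientGroup.eq_one_iff]
    rw [QuotientGroup.mk_pow, hmkXY, hxyp]
  have hsc := center_scalar hcenp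
  rw [Matrix.SpecialLinearGroup.coe_pow, Matrix.SpecialLinearGroup.coe_mul] at hsc
  have hDns : ¬((A * B : Matrix (Fin 2) (Fin 2) (ZMod p)) = 1 ∨ (A * B) = -1) := by
    intro h
    apply hxy1
    rw [← hmkXY]
    refine (QuotientGroup.eq_one_iff _).mpr (scalar_mem_center ?_)
    rw [Matrix.SpecialLinearGroup.coe_mul]
    exact h
  have hrelD : (A * B) * A * (A * B) * A = -1 := by
    have h1 : (A * B) * A * (A * B) * A = A * B * (A * A) * (B * A) := by noncomm_ring
    rw [h1, hA2]
    have h2 : A * B * (-1 : Matrix (Fin 2) (Fin 2) (ZMod p)) * (B * A)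
        = -(A * (B * B) * A) := by noncomm_ring
    rw [h2, hB2]
    have h3 : -(A * (-1 : Matrix (Fin 2) (Fin 2) (ZMod p)) * A) = A * A := by noncomm_ring
    rw [h3, hA2]
  have hodd : Odd p := hp.odd_of_ne_two (by omega)
  rcases hsc with h | h
  · exact final hns A (A * B) hA2 htrA X.2 h (fun h1 => hDns (Or.inl h1)) hrelD
  · refine final hns A (-(A * B)) hA2 htrA X.2 ?_ ?_ ?_
    · rw [neg_pow, Odd.neg_one_pow hodd, h, neg_one_mul, neg_neg]
    · intro h1
      exact hDns (Or.inr (by rw [← neg_neg (A*B), h1]))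
    · have : -(A * B) * A * -(A * B) * A = (A * B) * A * (A * B) * A := by noncomm_ring
      rw [this, hrelD]
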